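/- Let Λ = 𝒪[[T]] be the Iwasawa algebra over the ring of integers 𝒪 of a finite extension of ℚ_p. Let Y be a finitely generated Λ-module and Z ⊂ Y a free Λ-submodule. If Y contains no nonzero finite Λ-submodule, then Y/Z contains no nonzero finite Λ-submodule. -/

import Mathlib

open PowerSeries


lemma C_dvd_iff' {O : Type*} [CommRing O] (r : O) (g : PowerSeries O) :
    (PowerSeries.C (R := O) r) ∣ g ↔ ∀ n, r ∣ PowerSeries.coeff (R := O) n g := by
  constructor
  · rintro ⟨h, rfl⟩ n
    rw [PowerSeries.coeff_C_mul]
    exact Dvd.intro _ rfl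
  · intro h
    refine ⟨PowerSeries.mk fun n => Classical.choose (h n), ?_⟩
    ext n
    rw [PowerSeries.coeff_C_mul, PowerSeries.coeff_mk]
    exact Classical.choose_spec (h n)

lemma prime_C' {O : Type*} [CommRing O] [IsDomain O] {ϖ : O} (hϖ : Prime ϖ) :
    Prime (PowerSeries.C (R := O) ϖ) := by
  classical
  refine ⟨fun h0 => hϖ.ne_zero (PowerSeries.C_injective (by simpa using h0)),
    fun hu => hϖ.not_isUnit ?_, ?_⟩
  · simpa using hu.map (PowerSeries.constantCoeff (R := O))
  · intro a b hab
    by_contra hcon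
    push_neg at hcon
    obtain ⟨ha, hb⟩ := hcon
    rw [C_dvd_iff'] at ha hb hab
    push_neg at ha hb
    have hia : ∃ n, ¬ ϖ ∣ PowerSeries.coeff (R := O) n a := ha
    have hib : ∃ n, ¬ ϖ ∣ PowerSeries.coeff (R := O) n b := hb
    set i := Nat.find hia with hi
    set j := Nat.find hib with hj
    have hmin_a : ∀ k < i, ϖ ∣ PowerSeries.coeff (R := O) k a := fun k hk => by
      have := Nat.find_min hia hk; simpa using this
    have hmin_b : ∀ k < j, ϖ ∣ PowerSeries.coeff (R := O) k b := fun k hk => by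
      have := Nat.find_min hib hk; simpa using this
    have hsum := hab (i + j)
    rw [PowerSeries.coeff_mul] at hsum
    have hmem : (i, j) ∈ Finset.HasAntidiagonal.antidiagonal (i + j) := by simp
    rw [← Finset.add_sum_erase _ _ hmem] at hsum
    have hrest : ϖ ∣ ∑ q ∈ (Finset.HasAntidiagonal.antidiagonal (i + j)).erase (i, j),
        PowerSeries.coeff (R := O) q.1 a * PowerSeries.coeff (R := O) q.2 b := by
      refine Finset.dvd_sum fun q hq => ?_
      obtain ⟨hne, hq⟩ := Finset.mem_erase.mp hq
      rw [Finset.HasAntidiagonal.mem_antidiagonal] at hq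
      rcases lt_trichotomy q.1 i with h | h | h
      · exact Dvd.dvd.mul_right (hmin_a _ h) _
      · exact absurd (Prod.ext h (by omega)) hne
      · exact Dvd.dvd.mul_left (hmin_b _ (by omega)) _
    have : ϖ ∣ PowerSeries.coeff (R := O) i a * PowerSeries.coeff (R := O) j b :=
      (dvd_add_right hrest).mp (by rwa [add_comm] at hsum)
    rcases hϖ.2.2 _ _ this with h | h
    · exact Nat.find_spec hia h
    · exact Nat.find_spec hib h



/-- **Greenberg–Vatsal, Lemma 2.6.**
Let `Λ = 𝒪[[T]]` be the Iwasawa algebra over the ring of integers `𝒪` of a finite extension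
of `ℚ_p` (realized as `PowerSeries 𝒪`).  Let `Y` be a finitely generated `Λ`-module and
`Z ⊂ Y` a free `Λ`-submodule.  If `Y` contains no nonzero finite `Λ`-submodule, then `Y/Z`
contains no nonzero finite `Λ`-submodule.  ("Finite" means of finite cardinality.) -/
theorem quotient_by_free_no_finite_submodule
    (p : ℕ) [Fact p.Prime]
    -- K : a finite extension of ℚ_p, with ring of integers O
    (K : Type) [Field K] [Algebra ℚ_[p] K] [FiniteDimensional ℚ_[p] K]
    (O : Type) [CommRing O] [IsDomain O] [IsDiscreteValuationRing O]
    [Algebra O K] [IsFractionRing O K]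
    -- Y : a finitely generated module over Λ = O[[T]]
    (Y : Type) [AddCommGroup Y] [Module (PowerSeries O) Y]
    [Module.Finite (PowerSeries O) Y]
    -- Z : a free Λ-submodule of Y
    (Z : Submodule (PowerSeries O) Y) (hZ : Module.Free (PowerSeries O) Z)
    -- Y contains no nonzero finite Λ-submodule
    (hY : ∀ N : Submodule (PowerSeries O) Y, Finite N → N = ⊥) :
    -- then Y/Z contains no nonzero finite Λ-submodule
    ∀ N : Submodule (PowerSeries O) (Y ⧸ Z), Finite N → N = ⊥ := by
    classical
  intro N hN
  haveI := hN
  haveI := hZ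
  -- characteristic zero
  haveI : CharZero K := charZero_of_injective_algebraMap (algebraMap ℚ_[p] K).injective
  haveI : CharZero O := ⟨fun a b h => by
    have := congrArg (algebraMap O K) h
    rw [map_natCast, map_natCast] at this
    exact Nat.cast_injective this⟩
  -- the uniformizer
  obtain ⟨ϖ, hϖ⟩ := IsDiscreteValuationRing.exists_prime O
  set π : PowerSeries O := PowerSeries.C (R := O) ϖ with hπdef
  have hπ : Prime π := prime_C' hϖ
  -- a power of ϖ annihilating N
  have hncard : (Nat.card ↥N : O) ≠ 0 :=
    Nat.cast_ne_zero.mpr (Nat.card_ne_zero.mpr ⟨⟨⟨0, N.zero_mem⟩⟩, inferInstance⟩)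
  obtain ⟨a, u, hu⟩ := IsDiscreteValuationRing.associated_pow_irreducible hncard hϖ.irreducible
  have hann : ∀ x ∈ N, π ^ a • x = (0 : Y ⧸ Z) := by
    intro x hx
    have h : (Nat.card ↥N) • (⟨x, hx⟩ : N) = 0 := card_nsmul_eq_zero'
    have h1 : (Nat.card ↥N) • x = 0 := congrArg Subtype.val h
    have h2 : (Nat.card ↥N : PowerSeries O) • x = 0 := by
      rw [Nat.cast_smul_eq_nsmul]; exact h1
    have h3 : π ^ a = (Nat.card ↥N : PowerSeries O) * PowerSeries.C (R := O) u := by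
      rw [hπdef, ← map_pow, ← hu, map_mul, map_natCast]
    rw [h3, mul_comm, mul_smul, h2, smul_zero]
  -- a second annihilator coprime to π
  obtain ⟨i0, j0, hij0, hphi⟩ := Finite.exists_ne_map_eq_of_infinite
    (fun k : ℕ => (fun x : ↥N => (⟨(PowerSeries.X : PowerSeries O) ^ k • (x : Y ⧸ Z),
      N.smul_mem _ x.2⟩ : ↥N)))
  obtain ⟨i, j, hij, hXij⟩ : ∃ i j : ℕ, i < j ∧ ∀ x ∈ N,
      (PowerSeries.X : PowerSeries O) ^ i • x = (PowerSeries.X : PowerSeries O) ^ j • x := by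
    rcases hij0.lt_or_gt with h | h
    · exact ⟨i0, j0, h, fun x hx => congrArg Subtype.val (congrFun hphi ⟨x, hx⟩)⟩
    · exact ⟨j0, i0, h, fun x hx => congrArg Subtype.val (congrFun hphi.symm ⟨x, hx⟩)⟩
  set f : PowerSeries O := PowerSeries.X ^ j - PowerSeries.X ^ i with hfdef
  have hfann : ∀ x ∈ N, f • x = (0 : Y ⧸ Z) := by
    intro x hx
    rw [hfdef, sub_smul, hXij x hx, sub_self]
  have hπf : ¬ π ∣ f := by
    intro hd
    rw [hπdef, C_dvd_iff'] at hd
    have := hd i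
    rw [hfdef, map_sub, PowerSeries.coeff_X_pow, PowerSeries.coeff_X_pow,
      if_neg (Nat.ne_of_lt hij), if_pos rfl, zero_sub] at this
    exact hϖ.not_isUnit (isUnit_of_dvd_one ((dvd_neg).mp this))
  have hπa_ne : π ^ a ≠ 0 := pow_ne_zero _ hπ.ne_zero
  -- the preimage W of N
  set W : Submodule (PowerSeries O) Y := N.comap Z.mkQ with hWdef
  have hZW : Z ≤ W := by
    intro z hz
    have : Z.mkQ z = 0 := by
      rw [← LinearMap.mem_ker, Submodule.ker_mkQ]; exact hz
    simpa [hWdef, Submodule.mem_comap, this] using N.zero_mem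
  -- torsion in W is trivial
  set S : Submodule (PowerSeries O) Y :=
    W ⊓ LinearMap.ker (LinearMap.lsmul (PowerSeries O) Y (π ^ a)) with hSdef
  haveI hnz : NoZeroSMulDivisors (PowerSeries O) ↥Z := ⟨fun h => smul_eq_zero.mp h⟩
  have hSbot : S = ⊥ := by
    refine hY S ?_
    refine Finite.of_injective (fun s : S => (⟨Z.mkQ s.1, s.2.1⟩ : ↥N)) ?_
    intro s t hst
    have h1 : Z.mkQ s.1 = Z.mkQ t.1 := congrArg Subtype.val hst
    have h2 : (s.1 - t.1) ∈ Z := by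
      rw [← Submodule.ker_mkQ Z, LinearMap.mem_ker, map_sub, h1, sub_self]
    have h3 : π ^ a • (s.1 - t.1) = 0 := by
      have hs : π ^ a • s.1 = 0 := s.2.2
      have ht : π ^ a • t.1 = 0 := t.2.2
      rw [smul_sub, hs, ht, sub_self]
    have h4 : π ^ a • (⟨s.1 - t.1, h2⟩ : Z) = 0 := Subtype.ext h3
    have h5 : (⟨s.1 - t.1, h2⟩ : Z) = 0 := by
      rcases (smul_eq_zero (r := π ^ a) (m := (⟨s.1 - t.1, h2⟩ : Z))).mp h4 with h | h
      · exact absurd h hπa_ne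
      · exact h
    have : s.1 - t.1 = 0 := by simpa using congrArg Subtype.val h5
    exact Subtype.ext (by rwa [sub_eq_zero] at this)
  -- main step : W ≤ Z
  have hWZ : W ≤ Z := by
    intro w hw
    have hwN : Z.mkQ w ∈ N := hw
    have hz₁ : π ^ a • w ∈ Z := by
      rw [← Submodule.ker_mkQ Z, LinearMap.mem_ker, map_smul, hann _ hwN]
    have hz₂ : f • w ∈ Z := by
      rw [← Submodule.ker_mkQ Z, LinearMap.mem_ker, map_smul, hfann _ hwN]
    set b := Module.Free.chooseBasis (PowerSeries O) ↥Z with hb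
    set zz₁ : ↥Z := ⟨π ^ a • w, hz₁⟩
    set zz₂ : ↥Z := ⟨f • w, hz₂⟩
    have hcomm : f • zz₁ = π ^ a • zz₂ := Subtype.ext (by
      show f • (π ^ a • w) = π ^ a • (f • w)
      rw [smul_smul, smul_smul, mul_comm])
    have hrepr : ∀ k, f * b.repr zz₁ k = π ^ a * b.repr zz₂ k := by
      intro k
      have := congrArg (fun z => b.repr z k) hcomm
      simpa [map_smul, Finsupp.smul_apply, smul_eq_mul] using this
    have hdvd : ∀ k, ∃ t, b.repr zz₁ k = π ^ a * t := by
      intro k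
      have : π ^ a ∣ f * b.repr zz₁ k := ⟨b.repr zz₂ k, hrepr k⟩
      exact hπ.pow_dvd_of_dvd_mul_left _ hπf this
    set c : Module.Free.ChooseBasisIndex (PowerSeries O) ↥Z →₀ PowerSeries O :=
      Finsupp.onFinset (b.repr zz₁).support (fun k => Classical.choose (hdvd k))
        (fun k hk => by
          by_contra h0
          have h1 : b.repr zz₁ k = 0 := Finsupp.notMem_support_iff.mp h0
          have h2 : π ^ a * Classical.choose (hdvd k) = 0 := by
            rw [← Classical.choose_spec (hdvd k)]; exact h1
          rcases mul_eq_zero.mp h2 with h | h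
          · exact hπa_ne h
          · exact hk h) with hc
    set v : ↥Z := b.repr.symm c with hv
    have hvz : π ^ a • v = zz₁ := by
      apply b.repr.injective
      rw [map_smul]
      have : b.repr v = c := b.repr.apply_symm_apply c
      rw [this]
      refine Finsupp.ext fun k => ?_
      rw [Finsupp.smul_apply, smul_eq_mul]
      exact (Classical.choose_spec (hdvd k)).symm
    have hvY : π ^ a • (v : Y) = π ^ a • w := by
      have := congrArg Subtype.val hvz
      simpa using this
    have hmem : w - (v : Y) ∈ S := by
      refine ⟨W.sub_mem hw (hZW v.2), ?_⟩
      show π ^ a • (w - (v : Y)) = 0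
      rw [smul_sub, hvY, sub_self]
    rw [hSbot] at hmem
    have : w = (v : Y) := by
      have := (Submodule.mem_bot _).mp hmem
      rwa [sub_eq_zero] at this
    rw [this]; exact v.2
  -- conclude
  rw [eq_bot_iff]
  intro x hx
  obtain ⟨w, rfl⟩ := Z.mkQ_surjective x
  have hwZ : w ∈ Z := hWZ hx
  have : Z.mkQ w = 0 := by
    rw [← LinearMap.mem_ker, Submodule.ker_mkQ]; exact hwZ
  simp [this]
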